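/- Let (W,S) be a right-angled Coxeter system, let s ∈ S, and let u, w ∈ W satisfy ℓ(s*u) < ℓ(u) and ℓ(s*w) > ℓ(w). Then s ∈ P(1|u, s*w), s ∉ P(1|s*u, w), and conjugation by s maps P(1|u, s*w) onto the disjoint union P(1|s*u, w) ∪ {s}: one has {s*c*s : c ∈ P(1|u, s*w)} = P(1|s*u, w) ∪ {s}. Equivalently, c ↦ s*c*s is a bijection from P(1|u, s*w) \ {s} onto P(1|s*u, w). -/

import Mathlib

/-- A Coxeter matrix is *right-angled* if any two distinct generators either commute
(`M i j = 2`) or generate an infinite dihedral group (`M i j = 0`). -/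
def CoxeterMatrix.IsRightAngled {B : Type*} (M : CoxeterMatrix B) : Prop :=
  ∀ i j : B, i ≠ j → M i j = 2 ∨ M i j = 0

/-- `sepSet cs u w` is the set `P(1|u,w)` of reflections separating `1` from both
`u` and `w`, i.e. the common left inversions of `u` and `w`. -/
def sepSet {B W : Type*} [Group W] {M : CoxeterMatrix B} (cs : CoxeterSystem M W)
    (u w : W) : Set W :=
  {t | cs.IsReflection t ∧ cs.length (t * u) < cs.length u ∧
    cs.length (t * w) < cs.length w}

namespace RASep

open CoxeterSystem List

open scoped Classical

variable {B W : Type*} [Group W] {M : CoxeterMatrix B} (cs : CoxeterSystem M W)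

lemma conj_conj (i : B) (x : W) :
    cs.simple i * (cs.simple i * x * cs.simple i) * cs.simple i = x := by
  calc cs.simple i * (cs.simple i * x * cs.simple i) * cs.simple i
      = (cs.simple i * cs.simple i) * x * (cs.simple i * cs.simple i) := by group
    _ = x := by rw [cs.simple_mul_simple_self]; simp

lemma conj_eq_iff {a : W} (ha : a * a = 1) (x c : W) :
    a * x * a = c ↔ x = a * c * a := by
  constructor
  · rintro rfl
    calc x = (a * a) * x * (a * a) := by rw [ha]; simp
      _ = a * (a * x * a) * a := by group
  · rintro rfl
    calc a * (a * c * a) * a = (a * a) * c * (a * a) := by group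
      _ = c := by rw [ha]; simp

lemma conj_eq_self_iff {a : W} (ha : a * a = 1) (x : W) :
    a * x * a = a ↔ x = a := by
  rw [conj_eq_iff ha, ha, one_mul]

/-- The permutation of `W × ℤˣ` associated to a simple reflection. -/
noncomputable def sig (i : B) : Equiv.Perm (W × ℤˣ) :=
  Function.Involutive.toPerm
    (fun p => (cs.simple i * p.1 * cs.simple i, if p.1 = cs.simple i then -p.2 else p.2))
    (by
      intro ⟨x, e⟩
      have h1 := conj_conj cs i x
      have h2 := conj_eq_self_iff (cs.simple_mul_simple_self i) x
      by_cases hx : x = cs.simple i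
      · simp [hx, h1, h2]
      · simp [hx, h1, h2])

lemma sig_apply (i : B) (p : W × ℤˣ) :
    sig cs i p = (cs.simple i * p.1 * cs.simple i, if p.1 = cs.simple i then -p.2 else p.2) :=
  rfl

lemma sig_liftable (hra : M.IsRightAngled) : M.IsLiftable (fun i => sig cs i) := by
  intro i j
  rcases eq_or_ne i j with rfl | hij
  · rw [M.diagonal i, pow_one]
    apply Equiv.ext
    intro ⟨x, e⟩
    simp only [Equiv.Perm.mul_apply, Equiv.Perm.one_apply, sig_apply]
    have h1 := conj_conj cs i x
    have h2 := conj_eq_self_iff (cs.simple_mul_simple_self i) x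
    by_cases hx : x = cs.simple i
    · simp [hx, h1, h2]
    · simp [hx, h1, h2]
  · rcases hra i j hij with hM | hM
    · -- commuting case
      set a := cs.simple i with hadef
      set b := cs.simple j with hbdef
      have ha : a * a = 1 := cs.simple_mul_simple_self i
      have hb : b * b = 1 := cs.simple_mul_simple_self j
      have habab : a * b * a * b = 1 := by
        have h := cs.simple_mul_simple_pow i j
        rw [← hadef, ← hbdef, hM, pow_two, ← mul_assoc] at h
        exact h
      have hbaba : b * a * b * a = 1 := by
        have h := cs.simple_mul_simple_pow j i
        rw [← hadef, ← hbdef, M.symmetric j i, hM, pow_two, ← mul_assoc] at h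
        exact h
      have hbab : b * a * b = a := by
        have h' : b * a * b * a * a = a := by rw [hbaba]; simp
        calc b * a * b = b * a * b * (a * a) := by rw [ha]; simp
          _ = a := by rw [← mul_assoc, h']
      have haba : a * b * a = b := by
        have h' : a * b * a * b * b = b := by rw [habab]; simp
        calc a * b * a = a * b * a * (b * b) := by rw [hb]; simp
          _ = b := by rw [← mul_assoc, h']
      have haaa : a * a * a = a := by rw [ha, one_mul]
      have hbbb : b * b * b = b := by rw [hb, one_mul]
      rw [hM]
      apply Equiv.ext
      intro ⟨x, e⟩
      simp only [pow_two, Equiv.Perm.mul_apply, Equiv.Perm.one_apply, sig_apply]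
      have c2 : (b * x * b = a) ↔ x = a := by rw [conj_eq_iff hb, hbab]
      have c3 : (a * (b * x * b) * a = b) ↔ x = b := by
        rw [conj_eq_iff ha, haba, conj_eq_iff hb, hbbb]
      have c4 : (b * (a * (b * x * b) * a) * b = a) ↔ x = a := by
        rw [conj_eq_iff hb, hbab, conj_eq_iff ha, haaa, conj_eq_iff hb, hbab]
      have hfst : a * (b * (a * (b * x * b) * a) * b) * a = x := by
        calc a * (b * (a * (b * x * b) * a) * b) * a
            = (a * b * a * b) * x * (b * a * b * a) := by group
          _ = x := by rw [habab, hbaba]; simp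
      rw [← hadef, ← hbdef]
      simp only [c2, c3, c4, hfst]
      by_cases hxa : x = a <;> by_cases hxb : x = b
      · have hab : a = b := hxa.symm.trans hxb
        simp [hxa, hxb, hab, ← hadef, ← hbdef]
      · have hab : ¬ (a = b) := fun h => hxb (hxa.trans h)
        have hba : ¬ (b = a) := fun h => hab h.symm
        simp [hxa, hab, hba, ← hadef, ← hbdef]
      · have hba : ¬ (b = a) := fun h => hxa (hxb.trans h)
        have hab : ¬ (a = b) := fun h => hba h.symm
        simp [hxb, hab, hba, ← hadef, ← hbdef]
      · simp [hxa, hxb, ← hadef, ← hbdef]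

    · rw [hM, pow_zero]


/-- The standard representation of `W` on `W × ℤˣ` (for right-angled systems). -/
noncomputable def phi (hra : M.IsRightAngled) : W →* Equiv.Perm (W × ℤˣ) :=
  cs.lift ⟨fun i => sig cs i, sig_liftable cs hra⟩

variable (hra : M.IsRightAngled)

lemma phi_simple (i : B) : phi cs hra (cs.simple i) = sig cs i :=
  cs.lift_apply_simple (sig_liftable cs hra) i

lemma phi_fst (v : W) : ∀ x : W, ∀ e : ℤˣ, (phi cs hra v (x, e)).1 = v * x * v⁻¹ := by
  induction v using cs.simple_induction_left with
  | one => intro x e; simp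
  | mul_simple_left w i ih =>
    intro x e
    rw [map_mul, Equiv.Perm.mul_apply, phi_simple, sig_apply]
    show cs.simple i * (phi cs hra w (x, e)).1 * cs.simple i = _
    rw [ih x e, mul_inv_rev, cs.inv_simple]
    group

lemma phi_snd (v : W) : ∀ x : W, ∀ e : ℤˣ, (phi cs hra v (x, e)).2
    = e * (phi cs hra v (x, 1)).2 := by
  induction v using cs.simple_induction_left with
  | one => intro x e; simp
  | mul_simple_left w i ih =>
    intro x e
    simp only [map_mul, Equiv.Perm.mul_apply, phi_simple, sig_apply]
    rw [phi_fst cs hra w x e, phi_fst cs hra w x 1, ih x e]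
    by_cases h : w * x * w⁻¹ = cs.simple i
    · simp [h, mul_neg]
    · simp [h]

/-- `eta cs hra v t` is the sign of `φ(v⁻¹)(t, 1)`. -/
noncomputable def eta (v t : W) : ℤˣ := (phi cs hra v⁻¹ (t, 1)).2

lemma eta_wordProd (ω : List B) (t : W) :
    eta cs hra (cs.wordProd ω) t = (-1) ^ ((cs.leftInvSeq ω).count t) := by
  induction ω generalizing t with
  | nil => simp [eta, cs.wordProd_nil]
  | cons i ω ih =>
    have hlis : cs.leftInvSeq (i :: ω)
        = cs.simple i :: List.map (MulAut.conj (cs.simple i)) (cs.leftInvSeq ω) := rfl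
    have hmap : (List.map (MulAut.conj (cs.simple i)) (cs.leftInvSeq ω)).count t
        = (cs.leftInvSeq ω).count (cs.simple i * t * cs.simple i) := by
      have ht : t = (MulAut.conj (cs.simple i)) (cs.simple i * t * cs.simple i) := by
        rw [MulAut.conj_apply, cs.inv_simple, conj_conj]
      conv_lhs => rw [ht]
      exact List.count_map_of_injective _ _ (MulAut.conj (cs.simple i)).injective _
    show (phi cs hra (cs.wordProd (i :: ω))⁻¹ (t, 1)).2 = _
    rw [cs.wordProd_cons, mul_inv_rev, cs.inv_simple, map_mul, Equiv.Perm.mul_apply,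
      phi_simple, sig_apply]
    show (phi cs hra (cs.wordProd ω)⁻¹
      (cs.simple i * t * cs.simple i, if t = cs.simple i then -1 else 1)).2 = _
    rw [phi_snd cs hra]
    have ihh := ih (cs.simple i * t * cs.simple i)
    rw [show eta cs hra (cs.wordProd ω) (cs.simple i * t * cs.simple i)
      = (phi cs hra (cs.wordProd ω)⁻¹ (cs.simple i * t * cs.simple i, 1)).2 from rfl] at ihh
    rw [ihh, hlis]
    by_cases h : t = cs.simple i
    · subst h
      rw [if_pos rfl, List.count_cons_self, hmap, show
        cs.simple i * cs.simple i * cs.simple i = cs.simple i from by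
          rw [cs.simple_mul_simple_self, one_mul], pow_succ]
      exact mul_comm _ _
    · rw [if_neg h, List.count_cons_of_ne (Ne.symm h), hmap, one_mul]

lemma length_lt_of_eta_eq_neg_one {t w : W} (h : eta cs hra w t = -1) :
    cs.length (t * w) < cs.length w := by
  obtain ⟨ω, hred, rfl⟩ := cs.exists_reduced_word' w
  rw [eta_wordProd] at h
  have hne : (cs.leftInvSeq ω).count t ≠ 0 := by
    intro h0
    rw [h0, pow_zero] at h
    exact absurd h (by decide)
  have hmem : t ∈ cs.leftInvSeq ω := by
    by_contra hmem
    exact hne (List.count_eq_zero.mpr hmem)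
  exact (cs.isLeftInversion_of_mem_leftInvSeq hred hmem).2

lemma phi_refl_self {t : W} (ht : cs.IsReflection t) (e : ℤˣ) :
    phi cs hra t (t, e) = (t, -e) := by
  obtain ⟨v, i, rfl⟩ := ht
  set t := v * cs.simple i * v⁻¹ with htdef
  set c : ℤˣ := (phi cs hra v⁻¹ (t, 1)).2 with hcdef
  set d : ℤˣ := (phi cs hra v (cs.simple i, 1)).2 with hddef
  have h1 : ∀ f : ℤˣ, phi cs hra v⁻¹ (t, f) = (cs.simple i, f * c) := by
    intro f
    refine Prod.ext ?_ ?_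
    · rw [phi_fst cs hra, htdef]; group
    · rw [phi_snd cs hra, hcdef]
  have h2 : ∀ f : ℤˣ, phi cs hra v (cs.simple i, f) = (t, f * d) := by
    intro f
    refine Prod.ext ?_ ?_
    · rw [phi_fst cs hra, htdef]
    · rw [phi_snd cs hra, hddef]
  have hcd : c * d = 1 := by
    have h3 : phi cs hra v (phi cs hra v⁻¹ (t, 1)) = (t, 1) := by
      rw [← Equiv.Perm.mul_apply, ← map_mul, mul_inv_cancel, map_one, Equiv.Perm.one_apply]
    rw [h1 1, one_mul, h2 c] at h3
    exact (Prod.ext_iff.mp h3).2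
  have hsplit : phi cs hra t = phi cs hra v * phi cs hra (cs.simple i) * phi cs hra v⁻¹ := by
    rw [← map_mul, ← map_mul, htdef]
  rw [hsplit, Equiv.Perm.mul_apply, Equiv.Perm.mul_apply, h1 e, phi_simple, sig_apply]
  show phi cs hra v (cs.simple i * cs.simple i * cs.simple i,
    if cs.simple i = cs.simple i then -(e * c) else e * c) = (t, -e)
  rw [if_pos rfl, show cs.simple i * cs.simple i * cs.simple i = cs.simple i from by
    rw [cs.simple_mul_simple_self, one_mul], h2 (-(e * c))]
  rw [neg_mul, mul_assoc, hcd, mul_one]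

lemma eta_mul_refl {t : W} (ht : cs.IsReflection t) (w : W) :
    eta cs hra (t * w) t = - eta cs hra w t := by
  show (phi cs hra (t * w)⁻¹ (t, 1)).2 = _
  rw [mul_inv_rev, map_mul, Equiv.Perm.mul_apply, show t⁻¹ = t from ht.inv,
    phi_refl_self cs hra ht, phi_snd cs hra]
  show -1 * (phi cs hra w⁻¹ (t, 1)).2 = _
  rw [neg_one_mul]
  rfl

/-- The key characterization: `t` is a left inversion of `w` iff `η(w,t) = -1`. -/
lemma length_lt_iff_eta {t : W} (ht : cs.IsReflection t) (w : W) :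
    cs.length (t * w) < cs.length w ↔ eta cs hra w t = -1 := by
  constructor
  · intro h
    rcases Int.units_eq_one_or (eta cs hra w t) with h1 | h1
    · exfalso
      have h2 : eta cs hra (t * w) t = -1 := by rw [eta_mul_refl cs hra ht, h1]
      have h3 := length_lt_of_eta_eq_neg_one cs hra h2
      rw [← mul_assoc, ht.mul_self, one_mul] at h3
      omega
    · exact h1
  · exact length_lt_of_eta_eq_neg_one cs hra

include hra in
/-- Conjugation lemma: for a reflection `t ≠ sᵢ`, `t` is a left inversion of `g`
iff `sᵢ t sᵢ` is a left inversion of `sᵢ g`. -/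
lemma length_conj_iff (i : B) {t : W} (ht : cs.IsReflection t) (hts : t ≠ cs.simple i)
    (g : W) :
    cs.length (t * g) < cs.length g ↔
      cs.length (cs.simple i * t * cs.simple i * (cs.simple i * g))
        < cs.length (cs.simple i * g) := by
  have ht' : cs.IsReflection (cs.simple i * t * cs.simple i) := by
    have := ht.conj (cs.simple i)
    rwa [cs.inv_simple] at this
  rw [length_lt_iff_eta cs hra ht g, length_lt_iff_eta cs hra ht' (cs.simple i * g)]
  have : eta cs hra (cs.simple i * g) (cs.simple i * t * cs.simple i) = eta cs hra g t := by
    show (phi cs hra (cs.simple i * g)⁻¹ (cs.simple i * t * cs.simple i, 1)).2 = _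
    rw [mul_inv_rev, cs.inv_simple, map_mul, Equiv.Perm.mul_apply, phi_simple, sig_apply]
    show (phi cs hra g⁻¹ (cs.simple i * (cs.simple i * t * cs.simple i) * cs.simple i,
      if cs.simple i * t * cs.simple i = cs.simple i then -1 else 1)).2 = _
    rw [conj_conj, if_neg (fun h => hts
      ((conj_eq_self_iff (cs.simple_mul_simple_self i) t).mp h))]
    rfl
  rw [this]


include hra in
lemma mem_sepSet_conj_iff (i : B) {t : W} (ht : cs.IsReflection t) (hts : t ≠ cs.simple i)
    (u w : W) :
    t ∈ sepSet cs u (cs.simple i * w) ↔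
      cs.simple i * t * cs.simple i ∈ sepSet cs (cs.simple i * u) w := by
  have ht' : cs.IsReflection (cs.simple i * t * cs.simple i) := by
    have := ht.conj (cs.simple i)
    rwa [cs.inv_simple] at this
  have hu := length_conj_iff cs hra i ht hts u
  have hw := length_conj_iff cs hra i ht hts (cs.simple i * w)
  rw [cs.simple_mul_simple_cancel_left] at hw
  simp only [sepSet, Set.mem_setOf_eq]
  constructor
  · rintro ⟨-, h1, h2⟩
    exact ⟨ht', hu.mp h1, hw.mp h2⟩
  · rintro ⟨-, h1, h2⟩
    exact ⟨ht, hu.mpr h1, hw.mpr h2⟩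

end RASep

/-- **Case 2 of the proof of Proposition 5.1:** if `ℓ(s*u) < ℓ(u)` and
`ℓ(s*w) > ℓ(w)`, then `s ∈ P(1|u,s*w)`, `s ∉ P(1|s*u,w)`, and conjugation by `s`
maps `P(1|u,s*w)` onto the disjoint union `P(1|s*u,w) ∪ {s}`; equivalently,
`c ↦ s*c*s` is a bijection from `P(1|u,s*w) \ {s}` onto `P(1|s*u,w)`. -/
theorem conj_sepSet_eq_union_simple
    {B W : Type*} [Group W] {M : CoxeterMatrix B} (cs : CoxeterSystem M W)
    (hra : M.IsRightAngled) (i : B) (u w : W)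
    (hsu : cs.length (cs.simple i * u) < cs.length u)
    (hsw : cs.length w < cs.length (cs.simple i * w)) :
    cs.simple i ∈ sepSet cs u (cs.simple i * w) ∧
    cs.simple i ∉ sepSet cs (cs.simple i * u) w ∧
    (fun c => cs.simple i * c * cs.simple i) '' sepSet cs u (cs.simple i * w) =
      sepSet cs (cs.simple i * u) w ∪ {cs.simple i} ∧
    Set.BijOn (fun c => cs.simple i * c * cs.simple i)
      (sepSet cs u (cs.simple i * w) \ {cs.simple i})
      (sepSet cs (cs.simple i * u) w) := by
  classical
  have hsss : cs.simple i * cs.simple i * cs.simple i = cs.simple i := by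
    rw [cs.simple_mul_simple_self, one_mul]
  have hs_mem : cs.simple i ∈ sepSet cs u (cs.simple i * w) := by
    refine ⟨cs.isReflection_simple i, hsu, ?_⟩
    rw [cs.simple_mul_simple_cancel_left]
    exact hsw
  have hs_not : cs.simple i ∉ sepSet cs (cs.simple i * u) w := by
    rintro ⟨-, h1, -⟩
    rw [cs.simple_mul_simple_cancel_left] at h1
    omega
  -- the main two-way correspondence
  have fwd : ∀ t ∈ sepSet cs u (cs.simple i * w), t ≠ cs.simple i →
      cs.simple i * t * cs.simple i ∈ sepSet cs (cs.simple i * u) w := by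
    intro t htmem hts
    exact (RASep.mem_sepSet_conj_iff cs hra i htmem.1 hts u w).mp htmem
  have bwd : ∀ x ∈ sepSet cs (cs.simple i * u) w,
      cs.simple i * x * cs.simple i ∈ sepSet cs u (cs.simple i * w) ∧
      cs.simple i * x * cs.simple i ≠ cs.simple i ∧
      cs.simple i * (cs.simple i * x * cs.simple i) * cs.simple i = x := by
    intro x hx
    have hxs : x ≠ cs.simple i := fun h => hs_not (h ▸ hx)
    have htr : cs.IsReflection (cs.simple i * x * cs.simple i) := by
      have := hx.1.conj (cs.simple i)
      rwa [cs.inv_simple] at this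
    have hts : cs.simple i * x * cs.simple i ≠ cs.simple i := fun h =>
      hxs ((RASep.conj_eq_self_iff (cs.simple_mul_simple_self i) x).mp h)
    refine ⟨?_, hts, RASep.conj_conj cs i x⟩
    refine (RASep.mem_sepSet_conj_iff cs hra i htr hts u w).mpr ?_
    rwa [RASep.conj_conj cs i x]
  refine ⟨hs_mem, hs_not, ?_, ?_, ?_, ?_⟩
  · ext x
    simp only [Set.mem_image, Set.mem_union, Set.mem_singleton_iff]
    constructor
    · rintro ⟨t, htmem, rfl⟩
      by_cases hts : t = cs.simple i
      · right; rw [hts]; exact hsss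
      · left; exact fwd t htmem hts
    · rintro (hx | hx)
      · obtain ⟨h1, h2, h3⟩ := bwd x hx
        exact ⟨cs.simple i * x * cs.simple i, h1, h3⟩
      · exact ⟨cs.simple i, hs_mem, by rw [hx]; exact hsss⟩
  · -- MapsTo
    rintro t ⟨htmem, hts⟩
    exact fwd t htmem (by simpa using hts)
  · -- InjOn
    rintro a - b - hab
    have := congrArg (fun y => cs.simple i * y * cs.simple i) hab
    simpa only [RASep.conj_conj cs i] using this
  · -- SurjOn
    intro x hx
    obtain ⟨h1, h2, h3⟩ := bwd x hx
    exact ⟨cs.simple i * x * cs.simple i, ⟨h1, by simpa using h2⟩, h3⟩
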